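/- Let f_k(n) be the number of ordered rooted binary trees of size n with largest caterpillar subtree of size at most k, where k ≥ 2. Then f_k(1) = 1 and for n ≥ 2, f_k(n) = Σ_{i=1}^{n−1} f_k(i) f_k(n−i) − [n = k+1]·2^{k−1}, where [n = k+1] is 1 if n = k+1 and 0 otherwise. -/

import Mathlib

/-- Ordered rooted binary trees: a tree is a leaf or an internal node with two ordered children. -/
inductive BTree where
  | leaf : BTree
  | node : BTree → BTree → BTree

/-- Size of a tree = number of leaves. -/
def BTree.size : BTree → ℕ
  | .leaf => 1
  | .node l r => l.size + r.size

/-- A tree is a caterpillar if every internal node has at least one leaf child. -/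
def BTree.isCaterpillar : BTree → Prop
  | .leaf => True
  | .node l r => (l = .leaf ∨ r = .leaf) ∧ l.isCaterpillar ∧ r.isCaterpillar

/-- The list of all subtrees (rooted at some node) of a tree. -/
def BTree.subtrees : BTree → List BTree
  | .leaf => [.leaf]
  | .node l r => .node l r :: (l.subtrees ++ r.subtrees)

/-- γ(t): the size of the biggest caterpillar subtree of `t`. -/
noncomputable def BTree.gamma (t : BTree) : ℕ :=
  sSup {m | ∃ s ∈ t.subtrees, s.isCaterpillar ∧ s.size = m}

/-- `fcount k n`: number of ordered rooted binary trees of size `n` with γ ≤ k. -/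
noncomputable def fcount (k n : ℕ) : ℕ :=
  Nat.card {t : BTree // t.size = n ∧ t.gamma ≤ k}

deriving instance DecidableEq for BTree

-- auxiliary
def BTree.isCat : BTree → Bool
  | .leaf => true
  | .node l r => (decide (l = .leaf) || decide (r = .leaf)) && l.isCat && r.isCat

lemma BTree.isCat_iff : ∀ t : BTree, t.isCat = true ↔ t.isCaterpillar
  | .leaf => by simp [isCat, isCaterpillar]
  | .node l r => by
    simp [isCat, isCaterpillar, isCat_iff l, isCat_iff r]; tauto

def BTree.gammaB : BTree → ℕ
  | .leaf => 1
  | .node l r => max (max l.gammaB r.gammaB) (if (BTree.node l r).isCat then (BTree.node l r).size else 0)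

lemma BTree.size_pos : ∀ t : BTree, 1 ≤ t.size
  | .leaf => le_refl _
  | .node l r => by have := size_pos l; have := size_pos r; simp [size]; omega

lemma BTree.gammaB_le_size : ∀ t : BTree, t.gammaB ≤ t.size
  | .leaf => le_refl _
  | .node l r => by
    have hl := gammaB_le_size l; have hr := gammaB_le_size r
    have := size_pos l; have := size_pos r
    simp only [gammaB, size] at *
    split <;> omega

lemma BTree.gammaB_node_of_cat (l r : BTree) (h : (BTree.node l r).isCat = true) :
    (BTree.node l r).gammaB = (BTree.node l r).size := by
  have hl := gammaB_le_size l; have hr := gammaB_le_size r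
  have := size_pos l; have := size_pos r
  simp only [gammaB, h, if_true, size] at *
  omega

lemma BTree.exists_witness : ∀ t : BTree, ∃ s ∈ t.subtrees, s.isCaterpillar ∧ s.size = t.gammaB
  | .leaf => ⟨.leaf, by simp [subtrees, isCaterpillar, size, gammaB]⟩
  | .node l r => by
    obtain ⟨sl, hsl, hcl, hzl⟩ := exists_witness l
    obtain ⟨sr, hsr, hcr, hzr⟩ := exists_witness r
    by_cases hc : (BTree.node l r).isCat = true
    · exact ⟨.node l r, by simp [subtrees], (isCat_iff _).mp hc,
        (gammaB_node_of_cat l r hc).symm⟩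
    · have : (BTree.node l r).gammaB = max l.gammaB r.gammaB := by
        simp [gammaB, hc]
      rcases le_total l.gammaB r.gammaB with h | h
      · exact ⟨sr, by simp [subtrees]; tauto, hcr, by omega⟩
      · exact ⟨sl, by simp [subtrees]; tauto, hcl, by omega⟩

lemma BTree.le_gammaB : ∀ t : BTree, ∀ s ∈ t.subtrees, s.isCaterpillar → s.size ≤ t.gammaB
  | .leaf => by
    intro s hs hc
    simp [subtrees] at hs; subst hs; simp [size, gammaB]
  | .node l r => by
    intro s hs hc
    have hmax : max l.gammaB r.gammaB ≤ (BTree.node l r).gammaB := by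
      simp only [gammaB]; exact le_max_left _ _
    simp only [subtrees, List.mem_cons, List.mem_append] at hs
    rcases hs with rfl | hs | hs
    · have hcat : (BTree.node l r).isCat = true := (isCat_iff _).mpr hc
      rw [gammaB_node_of_cat _ _ hcat]
    · exact le_trans (le_gammaB l s hs hc) (le_trans (le_max_left _ _) hmax)
    · exact le_trans (le_gammaB r s hs hc) (le_trans (le_max_right _ _) hmax)

lemma BTree.gamma_eq (t : BTree) : t.gamma = t.gammaB := by
  obtain ⟨s, hs, hc, hz⟩ := t.exists_witness
  have hmem : t.gammaB ∈ {m | ∃ s ∈ t.subtrees, s.isCaterpillar ∧ s.size = m} :=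
    ⟨s, hs, hc, hz⟩
  have hbdd : ∀ m ∈ {m | ∃ s ∈ t.subtrees, s.isCaterpillar ∧ s.size = m}, m ≤ t.gammaB := by
    rintro m ⟨s', hs', hc', rfl⟩
    exact t.le_gammaB s' hs' hc'
  exact le_antisymm (csSup_le ⟨_, hmem⟩ hbdd)
    (le_csSup ⟨t.gammaB, hbdd⟩ hmem)

lemma BTree.gammaB_left_le (l r : BTree) : l.gammaB ≤ (BTree.node l r).gammaB := by
  simp [gammaB]
lemma BTree.gammaB_right_le (l r : BTree) : r.gammaB ≤ (BTree.node l r).gammaB := by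
  simp [gammaB]

def trees : ℕ → Finset BTree
  | 0 => ∅
  | 1 => {.leaf}
  | (n+2) => (Finset.Ico 1 (n+2)).attach.biUnion fun i =>
      ((trees i.1) ×ˢ (trees (n+2 - i.1))).image fun p => .node p.1 p.2
decreasing_by
  · exact (Finset.mem_Ico.mp i.2).2
  · have h := Finset.mem_Ico.mp i.2; omega

lemma mem_trees : ∀ (t : BTree) (n : ℕ), t ∈ trees n ↔ t.size = n := by
  intro t
  induction t with
  | leaf =>
    intro n
    match n with
    | 0 => simp [trees, BTree.size]
    | 1 => simp [trees, BTree.size]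
    | (n+2) =>
      rw [trees]
      simp [BTree.size]
  | node l r ihl ihr =>
    intro n
    have hl := BTree.size_pos l
    have hr := BTree.size_pos r
    match n with
    | 0 => simp [trees, BTree.size]; omega
    | 1 => simp [trees, BTree.size]; omega
    | (n+2) =>
      rw [trees]
      simp only [Finset.mem_biUnion, Finset.mem_attach, true_and, Subtype.exists,
        Finset.mem_image, Finset.mem_product, Finset.mem_Ico, Prod.exists]
      constructor
      · rintro ⟨i, hi, a, b, ⟨ha, hb⟩, heq⟩
        cases heq
        rw [ihl] at ha; rw [ihr] at hb
        simp [BTree.size]; omega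
      · intro h
        simp [BTree.size] at h
        refine ⟨l.size, by omega, l, r, ⟨(ihl _).mpr rfl, (ihr _).mpr ?_⟩, rfl⟩
        omega

lemma fcount_eq_card (k n : ℕ) :
    fcount k n = ((trees n).filter fun t => t.gammaB ≤ k).card := by
  have hset : {t : BTree | t.size = n ∧ t.gamma ≤ k}
      = ↑((trees n).filter fun t => t.gammaB ≤ k) := by
    ext t
    simp [mem_trees, BTree.gamma_eq, and_comm]
  calc fcount k n = Nat.card {t : BTree | t.size = n ∧ t.gamma ≤ k} := rfl
    _ = ({t : BTree | t.size = n ∧ t.gamma ≤ k}).ncard := (Nat.card_coe_set_eq _)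
    _ = _ := by rw [hset, Set.ncard_coe_finset]

lemma BTree.eq_leaf_of_size_one : ∀ t : BTree, t.size = 1 → t = .leaf
  | .leaf, _ => rfl
  | .node l r, h => by
    have := size_pos l; have := size_pos r
    simp [size] at h; omega

lemma cat_split (n : ℕ) (hn : 3 ≤ n) :
    (trees n).filter (fun t => t.isCat = true)
      = ((trees (n-1)).filter (fun t => t.isCat = true)).image (fun t => BTree.node .leaf t)
        ∪ ((trees (n-1)).filter (fun t => t.isCat = true)).image (fun t => BTree.node t .leaf) := by
  ext t
  simp only [Finset.mem_filter, Finset.mem_union, Finset.mem_image, mem_trees]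
  constructor
  · rintro ⟨hsz, hc⟩
    match t with
    | .leaf => simp [BTree.size] at hsz; omega
    | .node l r =>
      simp only [BTree.isCat, Bool.and_eq_true, Bool.or_eq_true, decide_eq_true_eq] at hc
      obtain ⟨⟨hlr, hcl⟩, hcr⟩ := hc
      simp only [BTree.size] at hsz
      rcases hlr with rfl | rfl
      · exact Or.inl ⟨r, ⟨by simp [BTree.size] at hsz ⊢; omega, hcr⟩, rfl⟩
      · exact Or.inr ⟨l, ⟨by simp [BTree.size] at hsz ⊢; omega, hcl⟩, rfl⟩
  · rintro (⟨s, ⟨hsz, hc⟩, rfl⟩ | ⟨s, ⟨hsz, hc⟩, rfl⟩) <;>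
      simp_all [BTree.size, BTree.isCat] <;> omega

lemma cat_card : ∀ n : ℕ, 2 ≤ n →
    ((trees n).filter (fun t => t.isCat = true)).card = 2 ^ (n - 2) := by
  intro n
  induction n using Nat.strong_induction_on with
  | _ n ih =>
    intro hn
    match n, hn with
    | 2, _ =>
      have : (trees 2).filter (fun t => t.isCat = true) = {BTree.node .leaf .leaf} := by
        ext t
        simp only [Finset.mem_filter, mem_trees, Finset.mem_singleton]
        constructor
        · rintro ⟨hsz, hc⟩
          match t with
          | .leaf => simp [BTree.size] at hsz
          | .node l r =>
            simp only [BTree.size] at hsz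
            have := BTree.size_pos l; have := BTree.size_pos r
            have hl : l = .leaf := BTree.eq_leaf_of_size_one l (by omega)
            have hr : r = .leaf := BTree.eq_leaf_of_size_one r (by omega)
            rw [hl, hr]
        · rintro rfl; simp [BTree.size, BTree.isCat]
      rw [this]; simp
    | (m+3), _ =>
      rw [cat_split (m+3) (by omega)]
      have hinj1 : Function.Injective (fun t => BTree.node .leaf t) := by
        intro a b h; simpa using h
      have hinj2 : Function.Injective (fun t : BTree => BTree.node t .leaf) := by
        intro a b h; simpa using h
      rw [Finset.card_union_of_disjoint, Finset.card_image_of_injective _ hinj1,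
        Finset.card_image_of_injective _ hinj2]
      · have h1 := ih (m+2) (by omega) (by omega)
        simp only [show m+3-1 = m+2 from rfl] at *
        rw [h1, show m+2-2 = m from rfl, show m+3-2 = m+1 from rfl]; ring
      · rw [Finset.disjoint_left]
        rintro t ht1 ht2
        simp only [Finset.mem_image, Finset.mem_filter, mem_trees] at ht1 ht2
        obtain ⟨a, ⟨ha, _⟩, rfl⟩ := ht1
        obtain ⟨b, ⟨hb, _⟩, heq⟩ := ht2
        cases heq
        simp [BTree.size] at ha hb

def childOK (k : ℕ) : BTree → Bool
  | .leaf => false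
  | .node l r => decide (l.gammaB ≤ k) && decide (r.gammaB ≤ k)

lemma B_card (k n : ℕ) (hn : 2 ≤ n) :
    ((trees n).filter (fun t => childOK k t = true)).card
      = ∑ i ∈ Finset.Ico 1 n, fcount k i * fcount k (n - i) := by
  obtain ⟨m, rfl⟩ : ∃ m, n = m + 2 := ⟨n - 2, by omega⟩
  rw [trees, Finset.filter_biUnion, Finset.card_biUnion]
  · rw [← Finset.sum_attach (Finset.Ico 1 (m+2))
      (fun i => fcount k i * fcount k (m + 2 - i))]
    refine Finset.sum_congr rfl fun i _ => ?_
    rw [Finset.filter_image]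
    have hinj : Function.Injective (fun p : BTree × BTree => BTree.node p.1 p.2) := by
      rintro ⟨a, b⟩ ⟨c, d⟩ h; simpa [Prod.ext_iff] using h
    rw [Finset.card_image_of_injective _ hinj]
    have heq : Finset.filter (fun a : BTree × BTree => childOK k (BTree.node a.1 a.2) = true)
          (trees i.1 ×ˢ trees (m + 2 - i.1))
        = (trees i.1).filter (fun t => t.gammaB ≤ k)
            ×ˢ (trees (m + 2 - i.1)).filter (fun t => t.gammaB ≤ k) := by
      ext ⟨a, b⟩
      simp [childOK, Finset.mem_product, and_assoc, and_left_comm]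
    rw [heq, Finset.card_product, fcount_eq_card, fcount_eq_card]
  · rintro ⟨i, hi⟩ - ⟨j, hj⟩ - hne
    rw [Function.onFun, Finset.disjoint_left]
    rintro t ht1 ht2
    simp only [Finset.mem_filter, Finset.mem_image, Finset.mem_product, Prod.exists] at ht1 ht2
    obtain ⟨⟨a, b, ⟨ha, hb⟩, rfl⟩, -⟩ := ht1
    obtain ⟨⟨c, d, ⟨hc, hd⟩, heq⟩, -⟩ := ht2
    cases heq
    rw [mem_trees] at ha hc
    exact hne (by simp [Subtype.ext_iff]; omega)

lemma BTree.gammaB_of_cat : ∀ t : BTree, t.isCat = true → t.gammaB = t.size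
  | .leaf, _ => rfl
  | .node l r, h => BTree.gammaB_node_of_cat l r h

lemma Bsdiff_eq (k n : ℕ) (hk : 2 ≤ k) (hn : 2 ≤ n) :
    ((trees n).filter (fun t => childOK k t = true))
        \ ((trees n).filter (fun t => t.gammaB ≤ k))
      = if n = k + 1 then (trees n).filter (fun t => t.isCat = true) else ∅ := by
  ext t
  simp only [Finset.mem_sdiff, Finset.mem_filter, mem_trees, not_and, not_le]
  constructor
  · rintro ⟨⟨hsz, hok⟩, hgt⟩
    have hgt' : k < t.gammaB := hgt hsz
    match t with
    | .leaf => simp [childOK] at hok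
    | .node l r =>
      simp only [childOK, Bool.and_eq_true, decide_eq_true_eq] at hok
      obtain ⟨hgl, hgr⟩ := hok
      by_cases hc : (BTree.node l r).isCat = true
      · -- caterpillar; child analysis
        have hsize := BTree.gammaB_node_of_cat l r hc
        have hnk : k < n := by
          rw [← hsz, ← hsize]; exact hgt'
        simp only [BTree.isCat, Bool.and_eq_true, Bool.or_eq_true, decide_eq_true_eq] at hc
        obtain ⟨⟨hlr, hcl⟩, hcr⟩ := hc
        have hkn : n ≤ k + 1 := by
          rcases hlr with rfl | rfl
          · have := BTree.gammaB_of_cat r hcr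
            have : r.size ≤ k := by omega
            simp [BTree.size] at hsz; omega
          · have := BTree.gammaB_of_cat l hcl
            have : l.size ≤ k := by omega
            simp [BTree.size] at hsz; omega
        have : n = k + 1 := by omega
        subst this
        rw [if_pos rfl]
        simp only [Finset.mem_filter, mem_trees]
        exact ⟨hsz, by simp [BTree.isCat]; tauto⟩
      · exfalso
        have : (BTree.node l r).gammaB = max l.gammaB r.gammaB := by
          simp [BTree.gammaB, hc]
        omega
  · intro ht
    split at ht
    · next hnk =>
      subst hnk
      simp only [Finset.mem_filter, mem_trees] at ht
      obtain ⟨hsz, hc⟩ := ht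
      match t with
      | .leaf => simp [BTree.size] at hsz; omega
      | .node l r =>
        have hcats := hc
        simp only [BTree.isCat, Bool.and_eq_true, Bool.or_eq_true, decide_eq_true_eq] at hc
        obtain ⟨⟨hlr, hcl⟩, hcr⟩ := hc
        have hgl := BTree.gammaB_of_cat l hcl
        have hgr := BTree.gammaB_of_cat r hcr
        have hgt := BTree.gammaB_node_of_cat l r hcats
        simp only [BTree.size] at hsz
        refine ⟨⟨by simp [BTree.size]; omega, ?_⟩, ?_⟩
        · simp only [childOK, Bool.and_eq_true, decide_eq_true_eq]
          rcases hlr with rfl | rfl <;>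
            simp [BTree.size, BTree.gammaB] at * <;> omega
        · intro _
          rw [hgt]; simp [BTree.size]; omega
    · simp at ht

lemma F_subset_B (k n : ℕ) (hn : 2 ≤ n) :
    ((trees n).filter (fun t => t.gammaB ≤ k))
      ⊆ ((trees n).filter (fun t => childOK k t = true)) := by
  intro t ht
  simp only [Finset.mem_filter, mem_trees] at ht ⊢
  obtain ⟨hsz, hg⟩ := ht
  refine ⟨hsz, ?_⟩
  match t with
  | .leaf => simp [BTree.size] at hsz; omega
  | .node l r =>
    have h1 := BTree.gammaB_left_le l r
    have h2 := BTree.gammaB_right_le l r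
    simp only [childOK, Bool.and_eq_true, decide_eq_true_eq]
    omega

/-- Recurrence for `f_k(n)`, the number of ordered rooted binary trees of size `n`
with largest caterpillar subtree of size at most `k ≥ 2`:
`f_k(1) = 1` and for `n ≥ 2`,
`f_k(n) = Σ_{i=1}^{n−1} f_k(i) f_k(n−i) − [n = k+1]·2^{k−1}`. -/
theorem fcount_recurrence (k : ℕ) (hk : 2 ≤ k) :
    fcount k 1 = 1 ∧
      ∀ n : ℕ, 2 ≤ n →
        (fcount k n : ℤ) =
          (∑ i ∈ Finset.Ico 1 n, (fcount k i : ℤ) * (fcount k (n - i) : ℤ)) -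
            (if n = k + 1 then 2 ^ (k - 1) else 0) := by
  constructor
  · rw [fcount_eq_card]
    have h1 : ((trees 1).filter fun t => t.gammaB ≤ k) = {BTree.leaf} := by
      ext t
      simp only [Finset.mem_filter, mem_trees, Finset.mem_singleton]
      constructor
      · rintro ⟨hsz, -⟩; exact BTree.eq_leaf_of_size_one t hsz
      · rintro rfl; exact ⟨rfl, by simp [BTree.gammaB]; omega⟩
    rw [h1]; rfl
  · intro n hn
    have hsub := F_subset_B k n hn
    have hcards := Finset.card_sdiff_add_card_eq_card hsub
    have hB := B_card k n hn
    have hsd := Bsdiff_eq k n hk hn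
    have hsdcard : (((trees n).filter (fun t => childOK k t = true))
        \ ((trees n).filter (fun t => t.gammaB ≤ k))).card
        = if n = k + 1 then 2 ^ (k - 1) else 0 := by
      rw [hsd]
      split
      · next h =>
        rw [cat_card n (by omega), h]
        congr 1
      · simp
    rw [fcount_eq_card]
    have : ∀ i ∈ Finset.Ico 1 n, (fcount k i : ℤ) * (fcount k (n-i) : ℤ)
        = ((fcount k i * fcount k (n-i) : ℕ) : ℤ) := by intros; push_cast; ring
    rw [Finset.sum_congr rfl this, ← Nat.cast_sum, ← hB]
    have hcast : ((if n = k + 1 then 2 ^ (k - 1) else 0 : ℕ) : ℤ)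
        = (if n = k + 1 then 2 ^ (k - 1) else 0 : ℤ) := by
      split <;> simp
    rw [← hcast, ← hsdcard]
    omega
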